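/- Let G be the complement of a bipartite graph with color classes A and B (so G[A] and G[B] are complete graphs and the edges of G between A and B are the non-edges of the bipartite graph). Then every HC-tree of G whose root separates A from B (i.e., one child subtree contains exactly the vertices of A and the other exactly the vertices of B) has minimum DC-cost among all HC-trees of G. -/

import Mathlib

/-- A rooted binary tree whose leaves are labelled by vertices of type `V`.
Every internal node has exactly two children. -/
inductive HCTree (V : Type) where
  | leaf : V → HCTree V
  | node : HCTree V → HCTree V → HCTree V

namespace HCTree

/-- The list of leaf labels of an HC-tree, from left to right. -/
def leaves {V : Type} : HCTree V → List V
  | leaf v => [v]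
  | node l r => leaves l ++ leaves r

open Classical in
/-- The Dasgupta cost of an HC-tree on a graph `G`: the sum over all edges `uv` of `G`
of the number of leaves of the subtree rooted at the least common ancestor of `u` and `v`.
Equivalently (as computed here, recursively), at each internal node we add
(number of leaves below the node) times (number of edges split at that node). -/
noncomputable def dcCost {V : Type} (G : SimpleGraph V) : HCTree V → ℕ
  | leaf _ => 0
  | node l r =>
      dcCost G l + dcCost G r +
        (l.leaves.length + r.leaves.length) *
          (l.leaves.map (fun u => r.leaves.countP (fun v => decide (G.Adj u v)))).sum

end HCTree

open HCTree

/-- `T` together with the implicit leaf labelling is an HC-tree of a graph on vertex set `V`: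
the leaf labels are pairwise distinct and every vertex occurs as a leaf label,
i.e. the labelling is a bijection between `V` and the leaves of `T`. -/
def IsHCTree {V : Type} (T : HCTree V) : Prop :=
  T.leaves.Nodup ∧ ∀ v : V, v ∈ T.leaves

/-- `W` is the maximum DC-cost over all HC-trees of `G`. -/
def IsMaxCost {V : Type} (G : SimpleGraph V) (W : ℕ) : Prop :=
  (∃ T : HCTree V, IsHCTree T ∧ dcCost G T = W) ∧
  ∀ T : HCTree V, IsHCTree T → dcCost G T ≤ W

/-- `W` is the minimum DC-cost over all HC-trees of `G`. -/
def IsMinCost {V : Type} (G : SimpleGraph V) (W : ℕ) : Prop :=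
  (∃ T : HCTree V, IsHCTree T ∧ dcCost G T = W) ∧
  ∀ T : HCTree V, IsHCTree T → W ≤ dcCost G T

/-- The disjoint union `G^(k)` of `k` copies of `G`, on vertex set `V × Fin k`. -/
def copies {V : Type} (G : SimpleGraph V) (k : ℕ) : SimpleGraph (V × Fin k) where
  Adj a b := a.2 = b.2 ∧ G.Adj a.1 b.1
  symm := ⟨fun _ _ h => ⟨h.1.symm, h.2.symm⟩⟩
  loopless := ⟨fun a h => G.loopless.irrefl a.1 h.2⟩

section Aux

variable {V : Type}

open Classical in
noncomputable def gp (G : SimpleGraph V) (u v : V) : Bool := decide (G.Adj u v)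

noncomputable def cross (p : V → V → Bool) (x y : List V) : ℕ :=
  (x.map (fun u => y.countP (p u))).sum

noncomputable def pc (p : V → V → Bool) : List V → ℕ
  | [] => 0
  | a :: t => t.countP (p a) + pc p t

noncomputable def ec (p : V → V → Bool) : HCTree V → ℕ
  | .leaf _ => 0
  | .node l r => ec p l + ec p r + cross p l.leaves r.leaves

lemma dcCost_node (G : SimpleGraph V) (l r : HCTree V) :
    dcCost G (.node l r) = dcCost G l + dcCost G r +
      (l.leaves.length + r.leaves.length) * cross (gp G) l.leaves r.leaves := rfl

lemma gp_true_iff (G : SimpleGraph V) (u v : V) : gp G u v = true ↔ G.Adj u v := by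
  simp [gp]

lemma sum_map_add (l : List V) (f g : V → ℕ) :
    (l.map f).sum + (l.map g).sum = (l.map (fun x => f x + g x)).sum := by
  induction l with
  | nil => simp
  | cons a t ih => simp only [List.map_cons, List.sum_cons]; omega

lemma countP_eq_sum_toNat (l : List V) (p : V → Bool) :
    l.countP p = (l.map (fun x => (p x).toNat)).sum := by
  induction l with
  | nil => simp
  | cons a t ih =>
    simp only [List.countP_cons, List.map_cons, List.sum_cons, ih]
    cases p a <;> simp <;> omega

lemma pc_append (p : V → V → Bool) (x y : List V) :
    pc p (x ++ y) = pc p x + pc p y + cross p x y := by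
  induction x with
  | nil => simp [pc, cross]
  | cons a t ih =>
    simp only [List.cons_append, pc, List.append_eq, List.countP_append, ih, cross,
      List.map_cons, List.sum_cons]
    omega

lemma ec_eq_pc (p : V → V → Bool) (T : HCTree V) : ec p T = pc p T.leaves := by
  induction T with
  | leaf v => simp [ec, pc, leaves]
  | node l r ihl ihr => simp [ec, leaves, pc_append, ihl, ihr]

lemma two_mul_pc (p : V → V → Bool) (hs : ∀ u v, p u v = p v u) (hi : ∀ u, p u u = false)
    (l : List V) : 2 * pc p l = (l.map (fun u => l.countP (p u))).sum := by
  induction l with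
  | nil => simp [pc]
  | cons a t ih =>
    have h1 : ∀ u, (a :: t).countP (p u) = t.countP (p u) + (p u a).toNat := by
      intro u; simp [List.countP_cons]; cases p u a <;> simp
    simp only [pc, List.map_cons, List.sum_cons, h1, hi, Bool.toNat_false, Nat.add_zero]
    have h2 : (t.map (fun u => t.countP (p u) + (p u a).toNat)).sum
        = (t.map (fun u => t.countP (p u))).sum + (t.map (fun u => (p u a).toNat)).sum := by
      rw [sum_map_add]
    have h3 : (t.map (fun u => (p u a).toNat)).sum = t.countP (p a) := by
      rw [countP_eq_sum_toNat]
      congr 1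
      exact List.map_congr_left (fun u _ => by rw [hs a u])
    omega

lemma pc_perm (p : V → V → Bool) (hs : ∀ u v, p u v = p v u) (hi : ∀ u, p u u = false)
    {l l' : List V} (h : l.Perm l') : pc p l = pc p l' := by
  have h1 := two_mul_pc p hs hi l
  have h2 := two_mul_pc p hs hi l'
  have h3 : (l.map (fun u => l.countP (p u))).sum = (l'.map (fun u => l'.countP (p u))).sum := by
    have e : (fun u => l.countP (p u)) = (fun u => l'.countP (p u)) := by
      funext u; exact h.countP_eq _
    rw [e]
    exact (h.map _).sum_eq
  omega

lemma dc_le (G : SimpleGraph V) (N : ℕ) :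
    ∀ T : HCTree V, T.leaves.length ≤ N → dcCost G T ≤ N * ec (gp G) T := by
  intro T
  induction T with
  | leaf v => intro _; simp [dcCost, ec]
  | node l r ihl ihr =>
    intro h
    rw [dcCost_node]
    simp only [leaves, List.length_append] at h
    have h1 := ihl (by omega)
    have h2 := ihr (by omega)
    have h3 : (l.leaves.length + r.leaves.length) * cross (gp G) l.leaves r.leaves
        ≤ N * cross (gp G) l.leaves r.leaves := Nat.mul_le_mul_right _ (by omega)
    simp only [ec, Nat.mul_add]
    omega

lemma dc_zero (G : SimpleGraph V) :
    ∀ T : HCTree V, (∀ u ∈ T.leaves, ∀ v ∈ T.leaves, ¬ G.Adj u v) →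
      dcCost G T = 0 ∧ ec (gp G) T = 0 := by
  intro T
  induction T with
  | leaf v => intro _; simp [dcCost, ec]
  | node l r ihl ihr =>
    intro h
    simp only [leaves, List.mem_append] at h
    have hl := ihl (fun u hu v hv => h u (Or.inl hu) v (Or.inl hv))
    have hr := ihr (fun u hu v hv => h u (Or.inr hu) v (Or.inr hv))
    have hc : cross (gp G) l.leaves r.leaves = 0 := by
      unfold cross
      rw [List.sum_eq_zero]
      intro x hx
      simp only [List.mem_map] at hx
      obtain ⟨u, hu, rfl⟩ := hx
      rw [List.countP_eq_zero]
      intro v hv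
      simp only [gp, decide_eq_true_iff]
      exact h u (Or.inl hu) v (Or.inr hv)
    rw [dcCost_node]
    constructor
    · rw [hl.1, hr.1, hc]; ring
    · simp [ec, hl.2, hr.2, hc]

lemma sum_map_const' (l : List V) (f : V → ℕ) (b : ℕ) (h : ∀ u ∈ l, f u = b) :
    (l.map f).sum = l.length * b := by
  induction l with
  | nil => simp
  | cons a t ih =>
    simp only [List.map_cons, List.sum_cons, List.length_cons]
    rw [h a (by simp), ih (fun u hu => h u (by simp [hu]))]
    ring

lemma dc_top (T : HCTree V) (h : T.leaves.Nodup) :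
    3 * dcCost (⊤ : SimpleGraph V) T + T.leaves.length = T.leaves.length ^ 3 := by
  induction T with
  | leaf v => simp [dcCost, leaves]
  | node l r ihl ihr =>
    simp only [leaves, List.nodup_append] at h
    obtain ⟨hnl, hnr, hd⟩ := h
    have ihl' := ihl hnl
    have ihr' := ihr hnr
    set a := l.leaves.length
    set b := r.leaves.length
    have hc : cross (gp (⊤ : SimpleGraph V)) l.leaves r.leaves = a * b := by
      unfold cross
      rw [sum_map_const' _ _ b]
      intro u hu
      rw [List.countP_eq_length]
      intro v hv
      simp only [gp, SimpleGraph.top_adj, decide_eq_true_iff]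
      intro huv
      exact hd u hu v hv huv
    rw [dcCost_node, hc]
    simp only [leaves, List.length_append]
    have e : (a + b) ^ 3 = a ^ 3 + b ^ 3 + 3 * ((a + b) * (a * b)) := by ring
    linarith

lemma countP_split (G : SimpleGraph V) (u : V) (l : List V) (h : ∀ v ∈ l, u ≠ v) :
    l.countP (gp G u) + l.countP (gp Gᶜ u) = l.length := by
  induction l with
  | nil => simp
  | cons a t ih =>
    have ha : u ≠ a := h a (by simp)
    have ht := ih (fun v hv => h v (by simp [hv]))
    simp only [List.countP_cons, List.length_cons]
    by_cases hadj : G.Adj u a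
    · have h1 : gp G u a = true := by simp [gp, hadj]
      have h2 : gp Gᶜ u a = false := by simp [gp, SimpleGraph.compl_adj, hadj]
      rw [h1, h2]; simp; omega
    · have h1 : gp G u a = false := by simp [gp, hadj]
      have h2 : gp Gᶜ u a = true := by simp [gp, SimpleGraph.compl_adj]; exact ⟨ha, hadj⟩
      rw [h1, h2]; simp; omega

lemma dc_split (G : SimpleGraph V) :
    ∀ T : HCTree V, T.leaves.Nodup →
      dcCost G T + dcCost Gᶜ T = dcCost (⊤ : SimpleGraph V) T := by
  intro T
  induction T with
  | leaf v => intro _; simp [dcCost]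
  | node l r ihl ihr =>
    intro h
    simp only [leaves, List.nodup_append] at h
    obtain ⟨hnl, hnr, hd⟩ := h
    have ihl' := ihl hnl
    have ihr' := ihr hnr
    set a := l.leaves.length
    set b := r.leaves.length
    have hc : cross (gp G) l.leaves r.leaves + cross (gp Gᶜ) l.leaves r.leaves
        = cross (gp (⊤ : SimpleGraph V)) l.leaves r.leaves := by
      unfold cross
      rw [sum_map_add]
      congr 1
      apply List.map_congr_left
      intro u hu
      have h1 := countP_split G u r.leaves (fun v hv e => hd u hu v hv e)
      have h2 : r.leaves.countP (gp (⊤ : SimpleGraph V) u) = r.leaves.length := by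
        rw [List.countP_eq_length]
        intro v hv
        simp only [gp, SimpleGraph.top_adj, decide_eq_true_iff]
        intro e; exact hd u hu v hv e
      omega
    rw [dcCost_node, dcCost_node, dcCost_node]
    have hm : (a + b) * cross (gp G) l.leaves r.leaves
        + (a + b) * cross (gp Gᶜ) l.leaves r.leaves
        = (a + b) * cross (gp (⊤ : SimpleGraph V)) l.leaves r.leaves := by
      rw [← Nat.mul_add, hc]
    linarith

end Aux

/-- Let `G` be the complement of a bipartite graph with color classes
`A` and `B = Aᶜ` (so `G[A]` and `G[B]` are complete, and the `A`–`B` edges of `G` are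
arbitrary).  Then every HC-tree of `G` whose root separates `A` from `B` has minimum
DC-cost among all HC-trees of `G`. -/
theorem compl_bipartite_root_split_minCost {V : Type} [Fintype V] (G : SimpleGraph V)
    (A : Set V)
    (hA : ∀ u v : V, u ∈ A → v ∈ A → u ≠ v → G.Adj u v)
    (hB : ∀ u v : V, u ∉ A → v ∉ A → u ≠ v → G.Adj u v)
    (L R : HCTree V) (hT : IsHCTree (HCTree.node L R))
    (hL : ∀ v ∈ L.leaves, v ∈ A) (hR : ∀ v ∈ R.leaves, v ∉ A) :
    ∀ T' : HCTree V, IsHCTree T' → dcCost G (HCTree.node L R) ≤ dcCost G T' := by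
  intro T' hT'
  obtain ⟨hnd, hcov⟩ := hT
  obtain ⟨hnd', hcov'⟩ := hT'
  -- the two leaf lists are permutations of each other
  have hperm : (HCTree.node L R).leaves.Perm T'.leaves := by
    rw [List.perm_ext_iff_of_nodup hnd hnd']
    intro v; simp [hcov v, hcov' v]
  have hlen : (HCTree.node L R).leaves.length = T'.leaves.length := hperm.length_eq
  -- symmetry/irreflexivity of the complement predicate
  have hs : ∀ u v : V, gp Gᶜ u v = gp Gᶜ v u := by
    intro u v; simp only [gp]
    by_cases h : Gᶜ.Adj u v
    · simp [h, h.symm]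
    · have h2 : ¬ Gᶜ.Adj v u := fun hh => h hh.symm
      simp [h, h2]
  have hi : ∀ u : V, gp Gᶜ u u = false := by
    intro u; simp [gp]
  -- the complement graph has no edges inside L or inside R
  have hzL := dc_zero Gᶜ L (by
    intro u hu v hv hadj
    rcases (SimpleGraph.compl_adj G u v).mp hadj with ⟨hne, hga⟩
    exact hga (hA u v (hL u hu) (hL v hv) hne))
  have hzR := dc_zero Gᶜ R (by
    intro u hu v hv hadj
    rcases (SimpleGraph.compl_adj G u v).mp hadj with ⟨hne, hga⟩
    exact hga (hB u v (hR u hu) (hR v hv) hne))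
  -- cost of complement on the root-split tree equals n * ec
  have hroot : dcCost Gᶜ (HCTree.node L R)
      = (HCTree.node L R).leaves.length * ec (gp Gᶜ) (HCTree.node L R) := by
    rw [dcCost_node, hzL.1, hzR.1]
    simp only [ec, hzL.2, hzR.2]
    simp only [leaves, List.length_append]
    ring
  -- ec of complement is the same on both trees
  have hec : ec (gp Gᶜ) T' = ec (gp Gᶜ) (HCTree.node L R) := by
    rw [ec_eq_pc, ec_eq_pc]
    exact pc_perm _ hs hi hperm.symm
  -- upper bound for the complement cost on T'
  have hub : dcCost Gᶜ T' ≤ dcCost Gᶜ (HCTree.node L R) := by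
    calc dcCost Gᶜ T' ≤ (HCTree.node L R).leaves.length * ec (gp Gᶜ) T' :=
          dc_le Gᶜ _ T' (by omega)
      _ = (HCTree.node L R).leaves.length * ec (gp Gᶜ) (HCTree.node L R) := by rw [hec]
      _ = dcCost Gᶜ (HCTree.node L R) := hroot.symm
  -- total cost conservation
  have h1 := dc_split G (HCTree.node L R) hnd
  have h2 := dc_split G T' hnd'
  have h3 := dc_top (HCTree.node L R) hnd
  have h4 := dc_top T' hnd'
  rw [← hlen] at h4
  omega
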